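/- arXiv:2509.18430 — 7 statements merged into one kernel-verified Lean document; each statement's English description precedes it below -/
import Mathlib

section
/- Let d be a natural number with d ≥ 4 and let Y, B, V be positive real numbers. Assume B^(2/(d-1)) ≥ (d/(d-2))·Y and V ≥ B^((d-2)/(d-1)) · Real.sqrt((4*(d-1)/(d-2))·Y). Then V^(2/d) ≥ (4*(d-1)/(d-2))^(1/d) · (d/(d-2))^((d-2)/d) · Y^((d-1)/d). -/
/-- Quantitative core of Theorem 1.1: combining the Gursky–Han and
Chen–Lai–Wang inequalities yields the lower bound on `V ^ (2/d)`. -/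
theorem stmt_0 (d : ℕ) (hd : 4 ≤ d) (Y B V : ℝ) (hY : 0 < Y) (hB : 0 < B) (hV : 0 < V)
    (h1 : B ^ ((2 : ℝ) / ((d : ℝ) - 1)) ≥ ((d : ℝ) / ((d : ℝ) - 2)) * Y)
    (h2 : V ≥ B ^ (((d : ℝ) - 2) / ((d : ℝ) - 1)) *
      Real.sqrt ((4 * ((d : ℝ) - 1) / ((d : ℝ) - 2)) * Y)) :
    V ^ ((2 : ℝ) / (d : ℝ)) ≥
      (4 * ((d : ℝ) - 1) / ((d : ℝ) - 2)) ^ ((1 : ℝ) / (d : ℝ)) *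
        ((d : ℝ) / ((d : ℝ) - 2)) ^ (((d : ℝ) - 2) / (d : ℝ)) *
        Y ^ (((d : ℝ) - 1) / (d : ℝ)) := by
  have hd4 : (4 : ℝ) ≤ (d : ℝ) := by exact_mod_cast hd
  have hdpos : (0 : ℝ) < d := by linarith
  have hd1 : (0 : ℝ) < (d : ℝ) - 1 := by linarith
  have hd2 : (0 : ℝ) < (d : ℝ) - 2 := by linarith
  set a : ℝ := (d : ℝ) / ((d : ℝ) - 2) with ha
  set c : ℝ := 4 * ((d : ℝ) - 1) / ((d : ℝ) - 2) with hc
  have hapos : 0 < a := div_pos hdpos hd2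
  have hcpos : 0 < c := div_pos (by linarith) hd2
  have haY : 0 < a * Y := mul_pos hapos hY
  have hcY : 0 < c * Y := mul_pos hcpos hY
  -- from h1 : B^((d-2)/(d-1)) ≥ (a*Y)^((d-2)/2)
  have hB1 : B ^ (((d : ℝ) - 2) / ((d : ℝ) - 1)) ≥ (a * Y) ^ (((d : ℝ) - 2) / 2) := by
    have := Real.rpow_le_rpow haY.le h1 (by positivity : (0:ℝ) ≤ ((d:ℝ)-2)/2)
    rwa [← Real.rpow_mul hB.le, show (2 : ℝ) / ((d : ℝ) - 1) * (((d:ℝ)-2)/2)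
          = ((d:ℝ)-2)/((d:ℝ)-1) from by field_simp] at this
  have hsq : Real.sqrt (c * Y) = (c * Y) ^ ((1:ℝ)/2) := Real.sqrt_eq_rpow (c*Y)
  have hV2 : V ≥ (a * Y) ^ (((d : ℝ) - 2) / 2) * (c * Y) ^ ((1:ℝ)/2) := by
    calc V ≥ B ^ (((d : ℝ) - 2) / ((d : ℝ) - 1)) * Real.sqrt (c * Y) := h2
    _ ≥ (a * Y) ^ (((d : ℝ) - 2) / 2) * (c * Y) ^ ((1:ℝ)/2) := by
        rw [hsq]
        exact mul_le_mul_of_nonneg_right hB1 (Real.rpow_nonneg hcY.le _)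
  have hRHSpos : 0 < (a * Y) ^ (((d : ℝ) - 2) / 2) * (c * Y) ^ ((1:ℝ)/2) :=
    mul_pos (Real.rpow_pos_of_pos haY _) (Real.rpow_pos_of_pos hcY _)
  have key : V ^ ((2 : ℝ) / (d : ℝ)) ≥
      (a * Y) ^ (((d : ℝ) - 2) / (d : ℝ)) * (c * Y) ^ ((1:ℝ)/(d : ℝ)) := by
    have := Real.rpow_le_rpow hRHSpos.le hV2 (by positivity : (0:ℝ) ≤ 2 / (d:ℝ))
    rwa [Real.mul_rpow (Real.rpow_nonneg haY.le _) (Real.rpow_nonneg hcY.le _),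
      ← Real.rpow_mul haY.le, ← Real.rpow_mul hcY.le,
      show ((d:ℝ)-2)/2 * (2/(d:ℝ)) = ((d:ℝ)-2)/(d:ℝ) from by field_simp,
      show (1:ℝ)/2 * (2/(d:ℝ)) = 1/(d:ℝ) from by rw [div_mul_div_comm]; ring_nf] at this
  have expand : (a * Y) ^ (((d : ℝ) - 2) / (d : ℝ)) * (c * Y) ^ ((1:ℝ)/(d : ℝ))
      = c ^ ((1 : ℝ) / (d : ℝ)) * a ^ (((d : ℝ) - 2) / (d : ℝ)) * Y ^ (((d : ℝ) - 1) / (d : ℝ)) := by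
    rw [Real.mul_rpow hapos.le hY.le, Real.mul_rpow hcpos.le hY.le,
      show ((d:ℝ)-1)/(d:ℝ) = ((d:ℝ)-2)/(d:ℝ) + 1/(d:ℝ) from by field_simp; ring,
      Real.rpow_add hY]
    ring
  rw [← ha, ← hc] at *
  linarith [key, expand ▸ key]
end

section
/- Let s₀ be a real number and let φ : ℝ → ℝ be a function which is differentiable at every s ≥ s₀ and satisfies φ'(s) ≥ −(1/8)·|φ(s)| + (1/2)·(1 − φ(s)²) for all s ≥ s₀. If φ(s₀) ≥ 0, then φ(s) ≥ 0 for all s ≥ s₀. -/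
/-- Barrier argument: nonnegativity persists under the differential inequality. -/
theorem stmt_2 (s₀ : ℝ) (φ : ℝ → ℝ)
    (hdiff : ∀ s, s₀ ≤ s → DifferentiableAt ℝ φ s)
    (hineq : ∀ s, s₀ ≤ s → deriv φ s ≥ -(1/8) * |φ s| + (1/2) * (1 - (φ s) ^ 2))
    (h0 : 0 ≤ φ s₀) :
    ∀ s, s₀ ≤ s → 0 ≤ φ s := by
  by_contra hcon
  push_neg at hcon
  obtain ⟨s₁, hs₁, hφs₁⟩ := hcon
  set S : Set ℝ := {s | s ∈ Set.Icc s₀ s₁ ∧ φ s < 0} with hS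
  have hne : S.Nonempty := ⟨s₁, ⟨hs₁, le_refl _⟩, hφs₁⟩
  have hbdd : BddBelow S := ⟨s₀, fun s hs => hs.1.1⟩
  set t := sInf S with htdef
  have hts₀ : s₀ ≤ t := le_csInf hne fun s hs => hs.1.1
  have hts₁ : t ≤ s₁ := csInf_le hbdd ⟨⟨hs₁, le_refl _⟩, hφs₁⟩
  have htnotS : ∀ s ∈ S, t ≤ s := fun s hs => csInf_le hbdd hs
  -- continuity
  have hcont : ∀ s, s₀ ≤ s → ContinuousAt φ s := fun s hs => (hdiff s hs).continuousAt
  -- φ t ≤ 0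
  have hle : φ t ≤ 0 := by
    by_contra h
    push_neg at h
    have := (hcont t hts₀).eventually (eventually_gt_nhds h)
    rw [Metric.eventually_nhds_iff] at this
    obtain ⟨ε, hε, hball⟩ := this
    obtain ⟨s, hsS, hst⟩ := exists_lt_of_csInf_lt hne (show sInf S < t + ε by linarith)
    have h1 : t ≤ s := htnotS s hsS
    have : 0 < φ s := hball (by rw [Real.dist_eq]; rw [abs_lt]; constructor <;> linarith)
    exact absurd hsS.2 (not_lt.mpr this.le)
  -- φ t ≥ 0
  have hge : 0 ≤ φ t := by
    rcases eq_or_lt_of_le hts₀ with h | h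
    · rwa [← h]
    · have htend : Filter.Tendsto φ (nhdsWithin t (Set.Iio t)) (nhds (φ t)) :=
        (hcont t hts₀).continuousWithinAt.tendsto
      refine ge_of_tendsto htend ?_
      filter_upwards [Ioo_mem_nhdsLT_of_mem ⟨h, le_refl t⟩] with s hs
      by_contra hneg
      push_neg at hneg
      have hsS : s ∈ S := ⟨⟨hs.1.le, hs.2.le.trans hts₁⟩, hneg⟩
      exact absurd (htnotS s hsS) (not_le.mpr hs.2)
  have ht0 : φ t = 0 := le_antisymm hle hge
  -- derivative positive at t
  have hdpos : (0:ℝ) < deriv φ t := by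
    have := hineq t hts₀
    rw [ht0] at this
    simp at this
    linarith
  have hd : HasDerivAt φ (deriv φ t) t := (hdiff t hts₀).hasDerivAt
  have hslope := hasDerivAt_iff_tendsto_slope.mp hd
  have hev : ∀ᶠ s in nhdsWithin t (Set.Ioi t), 0 < slope φ t s := by
    have h1 : ∀ᶠ s in nhdsWithin t {t}ᶜ, 0 < slope φ t s :=
      hslope.eventually (eventually_gt_nhds hdpos)
    exact h1.filter_mono (nhdsWithin_mono t fun s hs => ne_of_gt hs)
  rw [eventually_nhdsWithin_iff, Metric.eventually_nhds_iff] at hev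
  obtain ⟨ε, hε, hball⟩ := hev
  obtain ⟨s, hsS, hst⟩ := exists_lt_of_csInf_lt hne (show sInf S < t + ε by linarith)
  have h1 : t ≤ s := htnotS s hsS
  have h2 : t < s := lt_of_le_of_ne h1 (by rintro h; rw [← h] at hsS; exact lt_irrefl 0 (ht0 ▸ hsS.2))
  have h3 : 0 < slope φ t s := hball (by rw [Real.dist_eq, abs_lt]; constructor <;> linarith) h2
  rw [slope_def_field, div_pos_iff] at h3
  have : 0 < φ s := by
    rcases h3 with ⟨ha, hb⟩ | ⟨ha, hb⟩
    · rw [ht0] at ha; linarith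
    · linarith
  exact absurd hsS.2 (not_lt.mpr this.le)
end

section
/- Let s₁ be a real number and let φ : ℝ → ℝ be a function which is differentiable at every s ≥ s₁ and satisfies φ'(s) ≥ −(1/8)·|φ(s)| + (1/2)·(1 − φ(s)²) for all s ≥ s₁. If φ(s₁) ≥ 1/2, then φ(s) ≥ 1/2 for all s ≥ s₁. -/
/-- Persistence above the threshold 1/2 under the differential inequality. -/
theorem stmt_3 (s₁ : ℝ) (φ : ℝ → ℝ)
    (hdiff : ∀ s, s₁ ≤ s → DifferentiableAt ℝ φ s)
    (hineq : ∀ s, s₁ ≤ s → deriv φ s ≥ -(1/8) * |φ s| + (1/2) * (1 - (φ s) ^ 2))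
    (h0 : 1/2 ≤ φ s₁) :
    ∀ s, s₁ ≤ s → 1/2 ≤ φ s := by
  intro s hs
  by_contra hlt
  push_neg at hlt
  set A : Set ℝ := Set.Icc s₁ s ∩ φ ⁻¹' Set.Ici (1/2) with hA
  have hcont : ContinuousOn φ (Set.Icc s₁ s) := fun u hu =>
    ((hdiff u hu.1).continuousAt).continuousWithinAt
  have hAclosed : IsClosed A :=
    hcont.preimage_isClosed_of_isClosed isClosed_Icc isClosed_Ici
  have hs₁A : s₁ ∈ A := ⟨⟨le_refl _, hs⟩, h0⟩
  have hAne : A.Nonempty := ⟨s₁, hs₁A⟩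
  have hAbdd : BddAbove A := ⟨s, fun u hu => hu.1.2⟩
  set T := sSup A with hT
  have hTA : T ∈ A := hAclosed.csSup_mem hAne hAbdd
  have hTs₁ : s₁ ≤ T := hTA.1.1
  have hTs : T ≤ s := hTA.1.2
  have hTlt : T < s := by
    rcases lt_or_eq_of_le hTs with h | h
    · exact h
    · exact absurd (h ▸ hTA.2) (not_le.mpr hlt)
  -- everything strictly beyond T in (T, s] is below 1/2
  have hbelow : ∀ u ∈ Set.Ioc T s, φ u < 1/2 := by
    intro u hu
    by_contra hge
    push_neg at hge
    have : u ∈ A := ⟨⟨hTs₁.trans hu.1.le, hu.2⟩, hge⟩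
    exact absurd (le_csSup hAbdd this) (not_le.mpr hu.1)
  -- φ T = 1/2
  have hTmem : Set.Ioc T s ∈ nhdsWithin T (Set.Ioi T) :=
    Ioc_mem_nhdsGT_of_mem ⟨le_refl _, hTlt⟩
  have hTend : Filter.Tendsto φ (nhdsWithin T (Set.Ioi T)) (nhds (φ T)) :=
    ((hdiff T hTs₁).continuousAt).continuousWithinAt
  have hφT_le : φ T ≤ 1/2 := by
    refine le_of_tendsto hTend ?_
    filter_upwards [hTmem] with u hu using (hbelow u hu).le
  have hφT : φ T = 1/2 := le_antisymm hφT_le hTA.2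
  -- deriv φ T > 0
  have habs : |φ T| = 1/2 := by rw [hφT]; norm_num
  have hderiv_pos : 0 < deriv φ T := by
    have := hineq T hTs₁
    rw [habs, hφT] at this
    nlinarith
  -- slope tends to deriv, eventually positive, contradiction
  have hslope : Filter.Tendsto (slope φ T) (nhdsWithin T {T}ᶜ) (nhds (deriv φ T)) :=
    hasDerivAt_iff_tendsto_slope.mp (hdiff T hTs₁).hasDerivAt
  have hev : ∀ᶠ u in nhdsWithin T {T}ᶜ, 0 < slope φ T u :=
    hslope.eventually (eventually_gt_nhds hderiv_pos)
  have hev' : ∀ᶠ u in nhdsWithin T (Set.Ioi T), 0 < slope φ T u :=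
    hev.filter_mono (nhdsWithin_mono T (fun u hu => ne_of_gt hu))
  obtain ⟨u, hupos, huIoc⟩ := (hev'.and (Filter.eventually_mem_set.mpr hTmem)).exists
  have hune : u - T > 0 := sub_pos.mpr huIoc.1
  have : φ T < φ u := by
    have := hupos
    rw [slope_def_field] at this
    have h2 : 0 < φ u - φ T := by
      have := mul_pos this hune
      rw [div_mul_cancel₀] at this
      · linarith
      · exact ne_of_gt hune
    linarith
  rw [hφT] at this
  exact absurd this (not_lt.mpr (hbelow u huIoc).le)
end

section
/- Let s₁ be a real number, let C ≥ 0, and let v : ℝ → ℝ be a function which is differentiable at every s ≥ s₁, satisfies −1/2 ≤ v(s) ≤ 0 for all s ≥ s₁, and satisfies v'(s) ≥ −2·v(s) − v(s)² − C·exp(−2·(s − s₁)) for all s ≥ s₁. Then for all s ≥ s₁: 0 ≥ v(s) ≥ −(1/2 + C + (1/2 + 2C)²)·(1 + (s − s₁))·exp(−2·(s − s₁)). -/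
lemma ge_start_aux {f : ℝ → ℝ} {s₁ : ℝ}
    (hdiff : ∀ s, s₁ ≤ s → DifferentiableAt ℝ f s)
    (hd : ∀ s, s₁ ≤ s → 0 ≤ deriv f s) :
    ∀ s, s₁ ≤ s → f s₁ ≤ f s := by
  intro s hs
  have hmono : MonotoneOn f (Set.Ici s₁) := by
    apply monotoneOn_of_deriv_nonneg (convex_Ici s₁)
    · exact fun x hx => (hdiff x hx).continuousAt.continuousWithinAt
    · intro x hx
      rw [interior_Ici] at hx
      exact (hdiff x hx.le).differentiableWithinAt
    · intro x hx
      rw [interior_Ici] at hx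
      exact hd x hx.le
  exact hmono Set.self_mem_Ici hs hs

/-- Decay estimate (5.15) in Lemma 5.5. -/
theorem stmt_5 (s₁ C : ℝ) (hC : 0 ≤ C) (v : ℝ → ℝ)
    (hdiff : ∀ s, s₁ ≤ s → DifferentiableAt ℝ v s)
    (hbound : ∀ s, s₁ ≤ s → -1/2 ≤ v s ∧ v s ≤ 0)
    (hineq : ∀ s, s₁ ≤ s →
      deriv v s ≥ -2 * v s - (v s) ^ 2 - C * Real.exp (-2 * (s - s₁))) :
    ∀ s, s₁ ≤ s →
      0 ≥ v s ∧
        v s ≥ -(1/2 + C + (1/2 + 2 * C) ^ 2) * (1 + (s - s₁)) *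
          Real.exp (-2 * (s - s₁)) := by
  -- Step 1: the auxiliary function w₁
  obtain ⟨w₁, hw₁⟩ : ∃ w₁ : ℝ → ℝ, w₁ = fun t =>
      Real.exp (3/2 * (t - s₁)) * v t - 2 * C * Real.exp (-1/2 * (t - s₁)) := ⟨_, rfl⟩
  have hw₁diff : ∀ s, s₁ ≤ s → DifferentiableAt ℝ w₁ s := by
    intro s hs
    rw [hw₁]
    apply DifferentiableAt.sub
    · exact DifferentiableAt.mul (Real.differentiable_exp.comp
        ((differentiable_id.sub_const s₁).const_mul (3/2))).differentiableAt (hdiff s hs)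
    · exact (Real.differentiable_exp.comp
        ((differentiable_id.sub_const s₁).const_mul (-1/2))).differentiableAt.const_mul (2*C)
  have hw₁deriv : ∀ s, s₁ ≤ s → deriv w₁ s =
      Real.exp (3/2 * (s - s₁)) * (3/2) * v s
        + Real.exp (3/2 * (s - s₁)) * deriv v s
        + C * Real.exp (-1/2 * (s - s₁)) := by
    intro s hs
    have hid : HasDerivAt (fun t => (3/2 : ℝ) * (t - s₁)) (3/2) s := by
      simpa using ((hasDerivAt_id s).sub_const s₁).const_mul ((3:ℝ)/2)
    have hid2 : HasDerivAt (fun t => (-1/2 : ℝ) * (t - s₁)) (-1/2) s := by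
      simpa using ((hasDerivAt_id s).sub_const s₁).const_mul ((-1:ℝ)/2)
    have h : HasDerivAt w₁
        (Real.exp (3/2 * (s - s₁)) * (3/2) * v s
          + Real.exp (3/2 * (s - s₁)) * deriv v s
          + C * Real.exp (-1/2 * (s - s₁))) s := by
      rw [hw₁]
      have := (hid.exp.mul (hdiff s hs).hasDerivAt).sub (hid2.exp.const_mul (2*C))
      refine this.congr_deriv ?_
      ring
    exact h.deriv
  have hw₁deriv_nonneg : ∀ s, s₁ ≤ s → 0 ≤ deriv w₁ s := by
    intro s hs
    rw [hw₁deriv s hs]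
    have hi := hineq s hs
    have hb := hbound s hs
    have hpos : (0:ℝ) < Real.exp (3/2 * (s - s₁)) := Real.exp_pos _
    have hE : Real.exp (3/2 * (s - s₁)) * Real.exp (-2 * (s - s₁)) =
        Real.exp (-1/2 * (s - s₁)) := by
      rw [← Real.exp_add]; ring_nf
    -- multiply the differential inequality by exp(3/2 τ)
    have key : Real.exp (3/2 * (s - s₁)) * deriv v s ≥
        -2 * (Real.exp (3/2 * (s - s₁)) * v s)
          - Real.exp (3/2 * (s - s₁)) * v s ^ 2
          - C * Real.exp (-1/2 * (s - s₁)) := by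
      have h := mul_le_mul_of_nonneg_left hi hpos.le
      have hring : Real.exp (3/2 * (s - s₁)) *
          (-2 * v s - v s ^ 2 - C * Real.exp (-2 * (s - s₁))) =
          -2 * (Real.exp (3/2 * (s - s₁)) * v s)
            - Real.exp (3/2 * (s - s₁)) * v s ^ 2
            - C * Real.exp (-1/2 * (s - s₁)) := by
        rw [← hE]; ring
      linarith [hring ▸ h]
    have hsq : v s ^ 2 ≤ -(1/2) * v s := by nlinarith [hb.1, hb.2]
    have hsq' := mul_le_mul_of_nonneg_left hsq hpos.le
    linarith [key, hsq']
  have hstep1 : ∀ s, s₁ ≤ s →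
      v s ≥ -(1/2 + 2 * C) * Real.exp (-(3/2) * (s - s₁)) := by
    intro s hs
    have hmono := ge_start_aux hw₁diff hw₁deriv_nonneg s hs
    have hb₁ := hbound s₁ le_rfl
    rw [hw₁] at hmono
    simp only [sub_self, mul_zero, Real.exp_zero, one_mul, mul_one] at hmono
    have hpos2 : (0:ℝ) < Real.exp (-1/2 * (s - s₁)) := Real.exp_pos _
    have h2 : Real.exp (3/2 * (s - s₁)) * v s ≥ -(1/2 + 2*C) := by
      nlinarith [hb₁.1, mul_nonneg hC hpos2.le]
    have hpos3 : (0:ℝ) < Real.exp (-(3/2) * (s - s₁)) := Real.exp_pos _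
    have hE : Real.exp (-(3/2) * (s - s₁)) * Real.exp (3/2 * (s - s₁)) = 1 := by
      rw [← Real.exp_add]; ring_nf; exact Real.exp_zero
    have h3 := mul_le_mul_of_nonneg_left h2 hpos3.le
    have hv : Real.exp (-(3/2) * (s - s₁)) * (Real.exp (3/2 * (s - s₁)) * v s) = v s := by
      rw [← mul_assoc, hE, one_mul]
    rw [hv] at h3
    linarith [h3]
  -- Step 2: the auxiliary function w₂
  have hKnn : (0:ℝ) ≤ C + (1/2 + 2*C)^2 := by positivity
  obtain ⟨w₂, hw₂⟩ : ∃ w₂ : ℝ → ℝ, w₂ = fun t =>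
      Real.exp (2 * (t - s₁)) * v t + (C + (1/2 + 2*C)^2) * (t - s₁) := ⟨_, rfl⟩
  have hw₂diff : ∀ s, s₁ ≤ s → DifferentiableAt ℝ w₂ s := by
    intro s hs
    rw [hw₂]
    apply DifferentiableAt.add
    · exact DifferentiableAt.mul (Real.differentiable_exp.comp
        ((differentiable_id.sub_const s₁).const_mul 2)).differentiableAt (hdiff s hs)
    · exact ((differentiable_id.sub_const s₁).const_mul _).differentiableAt
  have hw₂deriv : ∀ s, s₁ ≤ s → deriv w₂ s =
      Real.exp (2 * (s - s₁)) * 2 * v s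
        + Real.exp (2 * (s - s₁)) * deriv v s + (C + (1/2 + 2*C)^2) := by
    intro s hs
    have hid : HasDerivAt (fun t => (2 : ℝ) * (t - s₁)) 2 s := by
      simpa using ((hasDerivAt_id s).sub_const s₁).const_mul (2:ℝ)
    have hidK : HasDerivAt (fun t => (C + (1/2 + 2*C)^2) * (t - s₁))
        (C + (1/2 + 2*C)^2) s := by
      simpa using ((hasDerivAt_id s).sub_const s₁).const_mul (C + (1/2 + 2*C)^2)
    have h : HasDerivAt w₂
        (Real.exp (2 * (s - s₁)) * 2 * v s
          + Real.exp (2 * (s - s₁)) * deriv v s + (C + (1/2 + 2*C)^2)) s := by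
      rw [hw₂]
      exact (hid.exp.mul (hdiff s hs).hasDerivAt).add hidK
    exact h.deriv
  have hw₂deriv_nonneg : ∀ s, s₁ ≤ s → 0 ≤ deriv w₂ s := by
    intro s hs
    rw [hw₂deriv s hs]
    have hi := hineq s hs
    have hb := hbound s hs
    have h1 := hstep1 s hs
    have hpos : (0:ℝ) < Real.exp (2 * (s - s₁)) := Real.exp_pos _
    have hE : Real.exp (2 * (s - s₁)) * Real.exp (-2 * (s - s₁)) = 1 := by
      rw [← Real.exp_add]; ring_nf; exact Real.exp_zero
    -- multiply the differential inequality by exp(2 τ)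
    have key : Real.exp (2 * (s - s₁)) * deriv v s ≥
        -2 * (Real.exp (2 * (s - s₁)) * v s)
          - Real.exp (2 * (s - s₁)) * v s ^ 2 - C := by
      have h := mul_le_mul_of_nonneg_left hi hpos.le
      have hring : Real.exp (2 * (s - s₁)) *
          (-2 * v s - v s ^ 2 - C * Real.exp (-2 * (s - s₁))) =
          -2 * (Real.exp (2 * (s - s₁)) * v s)
            - Real.exp (2 * (s - s₁)) * v s ^ 2 - C := by
        have : C * (Real.exp (2 * (s - s₁)) * Real.exp (-2 * (s - s₁))) = C := by
          rw [hE, mul_one]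
        nlinarith [this]
      linarith [hring ▸ h]
    -- bound exp(2τ) v² by (1/2+2C)²
    have hG : (0:ℝ) < Real.exp (-(3/2) * (s - s₁)) := Real.exp_pos _
    have h0 : 0 ≤ -v s := by linarith [hb.2]
    have hAG : -v s ≤ (1/2 + 2*C) * Real.exp (-(3/2) * (s - s₁)) := by linarith [h1]
    have hvsq : v s ^ 2 ≤
        ((1/2 + 2*C) * Real.exp (-(3/2) * (s - s₁))) ^ 2 := by
      have := pow_le_pow_left₀ h0 hAG 2
      simpa using this
    have hE2 : Real.exp (2 * (s - s₁)) * Real.exp (-(3/2) * (s - s₁)) ^ 2 =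
        Real.exp (-(s - s₁)) := by
      rw [sq, ← Real.exp_add, ← Real.exp_add]; ring_nf
    have hle1 : Real.exp (-(s - s₁)) ≤ 1 := by
      rw [← Real.exp_zero]
      exact Real.exp_le_exp.2 (by linarith)
    have h5 : Real.exp (2 * (s - s₁)) * v s ^ 2 ≤ (1/2 + 2*C)^2 := by
      have h6 := mul_le_mul_of_nonneg_left hvsq hpos.le
      have h7 : Real.exp (2 * (s - s₁)) *
          ((1/2 + 2*C) * Real.exp (-(3/2) * (s - s₁))) ^ 2 =
          (1/2 + 2*C)^2 * Real.exp (-(s - s₁)) := by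
        rw [mul_pow]
        rw [show Real.exp (2 * (s - s₁)) * ((1/2 + 2*C)^2 *
          Real.exp (-(3/2) * (s - s₁)) ^ 2) = (1/2 + 2*C)^2 *
          (Real.exp (2 * (s - s₁)) * Real.exp (-(3/2) * (s - s₁)) ^ 2) from by ring, hE2]
      rw [h7] at h6
      have h8 : (1/2 + 2*C)^2 * Real.exp (-(s - s₁)) ≤ (1/2 + 2*C)^2 * 1 :=
        mul_le_mul_of_nonneg_left hle1 (by positivity)
      linarith
    linarith [key, h5]
  intro s hs
  have hb := hbound s hs
  refine ⟨hb.2, ?_⟩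
  have hmono := ge_start_aux hw₂diff hw₂deriv_nonneg s hs
  have hb₁ := hbound s₁ le_rfl
  rw [hw₂] at hmono
  simp only [sub_self, mul_zero, Real.exp_zero, one_mul, add_zero] at hmono
  have h1 : -1/2 - (C + (1/2 + 2*C)^2) * (s - s₁) ≤ Real.exp (2 * (s - s₁)) * v s := by
    linarith [hb₁.1]
  have hpos : (0:ℝ) < Real.exp (-2 * (s - s₁)) := Real.exp_pos _
  have hE : Real.exp (-2 * (s - s₁)) * Real.exp (2 * (s - s₁)) = 1 := by
    rw [← Real.exp_add]; ring_nf; exact Real.exp_zero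
  have h3 := mul_le_mul_of_nonneg_left h1 hpos.le
  have hv : Real.exp (-2 * (s - s₁)) * (Real.exp (2 * (s - s₁)) * v s) = v s := by
    rw [← mul_assoc, hE, one_mul]
  rw [hv] at h3
  have hτ : 0 ≤ s - s₁ := by linarith
  have h4 : -(1/2 + C + (1/2 + 2 * C) ^ 2) * (1 + (s - s₁)) ≤
      -1/2 - (C + (1/2 + 2*C)^2) * (s - s₁) := by nlinarith [hKnn, hτ]
  have h5 := mul_le_mul_of_nonneg_left h4 hpos.le
  calc v s ≥ Real.exp (-2 * (s - s₁)) *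
        (-1/2 - (C + (1/2 + 2*C)^2) * (s - s₁)) := h3
    _ ≥ Real.exp (-2 * (s - s₁)) *
        (-(1/2 + C + (1/2 + 2 * C) ^ 2) * (1 + (s - s₁))) := h5
    _ = -(1/2 + C + (1/2 + 2 * C) ^ 2) * (1 + (s - s₁)) *
          Real.exp (-2 * (s - s₁)) := by ring
end

section
/- Let t be a real number and let φ : ℝ → ℝ be a function which is differentiable at every s in the interval [t, t + 15] and satisfies φ'(s) ≥ 3/8 − φ(s)² for all s in [t, t + 15]. If φ(t) ≥ 0, then there exists s in [t, t + 15] with φ(s) ≥ 11/20. -/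
/-- On an interval of length 15, the Riccati inequality forces φ to reach 11/20. -/
theorem stmt_8 (t : ℝ) (φ : ℝ → ℝ)
    (hdiff : ∀ s ∈ Set.Icc t (t + 15), DifferentiableAt ℝ φ s)
    (hineq : ∀ s ∈ Set.Icc t (t + 15), deriv φ s ≥ 3/8 - (φ s) ^ 2)
    (h0 : 0 ≤ φ t) :
    ∃ s ∈ Set.Icc t (t + 15), 11/20 ≤ φ s := by
  by_contra h
  push_neg at h
  have hI : (t : ℝ) ≤ t + 15 := by linarith
  have hcont : ContinuousOn φ (Set.Icc t (t + 15)) :=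
    fun s hs => (hdiff s hs).continuousAt.continuousWithinAt
  -- key derivative bound when φ s > -1/2
  have key : ∀ s ∈ Set.Icc t (t + 15), -(1/2) < φ s → (29/400 : ℝ) ≤ deriv φ s := by
    intro s hs hlt
    have h1 := hineq s hs
    have h2 := h s hs
    nlinarith [mul_pos (by linarith : (0:ℝ) < 11/20 - φ s) (by linarith : (0:ℝ) < 11/20 + φ s)]
  set K : Set ℝ := Set.Icc t (t + 15) ∩ φ ⁻¹' Set.Iic (-(1/2)) with hK
  by_cases hKe : K.Nonempty
  · -- there is a point where φ ≤ -1/2; take the first one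
    have hKclosed : IsClosed K :=
      hcont.preimage_isClosed_of_isClosed isClosed_Icc isClosed_Iic
    have hKcompact : IsCompact K :=
      (isCompact_Icc : IsCompact (Set.Icc t (t+15))).of_isClosed_subset hKclosed
        Set.inter_subset_left
    have hcmem : sInf K ∈ K := hKclosed.csInf_mem hKe hKcompact.bddBelow
    set c := sInf K
    obtain ⟨hcI, hcle⟩ := hcmem
    have hcIcc : t ≤ c ∧ c ≤ t + 15 := ⟨hcI.1, hcI.2⟩
    have htc : t < c := by
      rcases lt_or_eq_of_le hcIcc.1 with h' | h'
      · exact h'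
      · exfalso; rw [← h'] at hcle; simp at hcle; linarith
    -- on [t, c], interior points satisfy φ > -1/2
    have hsub : Set.Icc t c ⊆ Set.Icc t (t + 15) :=
      Set.Icc_subset_Icc le_rfl hcIcc.2
    have hgrow := (convex_Icc t c).mul_sub_le_image_sub_of_le_deriv
      (hcont.mono hsub)
      (fun x hx => ((hdiff x (hsub ((interior_subset : interior (Set.Icc t c) ⊆ _) hx))).differentiableWithinAt))
      (C := 29/400)
      (fun x hx => by
        rw [interior_Icc] at hx
        have hxI : x ∈ Set.Icc t (t + 15) := hsub (Set.Ioo_subset_Icc_self hx)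
        apply key x hxI
        by_contra hneg
        push_neg at hneg
        have : x ∈ K := ⟨hxI, by simpa using hneg⟩
        have := csInf_le hKcompact.bddBelow this
        linarith [hx.2])
      t (Set.left_mem_Icc.2 htc.le) c (Set.right_mem_Icc.2 htc.le) htc.le
    have : φ c ∈ Set.Iic (-(1/2) : ℝ) := hcle
    simp only [Set.mem_Iic] at this
    nlinarith
  · -- φ > -1/2 everywhere, so deriv ≥ 29/400 on the whole interval
    have hgt : ∀ s ∈ Set.Icc t (t + 15), -(1/2 : ℝ) < φ s := by
      intro s hs
      by_contra hneg
      push_neg at hneg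
      exact hKe ⟨s, hs, by simpa using hneg⟩
    have hgrow := (convex_Icc t (t + 15)).mul_sub_le_image_sub_of_le_deriv
      hcont
      (fun x hx => (hdiff x ((interior_subset : interior (Set.Icc t (t+15)) ⊆ _) hx)).differentiableWithinAt)
      (C := 29/400)
      (fun x hx => key x (interior_subset hx) (hgt x (interior_subset hx)))
      t (Set.left_mem_Icc.2 hI) (t + 15) (Set.right_mem_Icc.2 hI) hI
    have := h (t + 15) (Set.right_mem_Icc.2 hI)
    nlinarith
end

section
/- Let t be a real number, let ε ≥ 0, and let v : ℝ → ℝ be a function which is differentiable at every s ≥ t, satisfies v(s) ≤ 0 for all s ≥ t, and satisfies v'(s) ≥ −(3/2)·v(s) − ε·Real.sqrt(−2·v(s)) for all s ≥ t. Then for all s ≥ t: −v(s) ≤ (Real.sqrt(−v(t))·exp(−(3/4)·(s − t)) + (2·Real.sqrt 2 / 3)·ε)². -/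
open Set Filter Topology

/-- Square-root Riccati comparison from the proof of Lemma 5.8. -/
theorem stmt_10 (t ε : ℝ) (hε : 0 ≤ ε) (v : ℝ → ℝ)
    (hdiff : ∀ s, t ≤ s → DifferentiableAt ℝ v s)
    (hnonpos : ∀ s, t ≤ s → v s ≤ 0)
    (hineq : ∀ s, t ≤ s →
      deriv v s ≥ -(3/2) * v s - ε * Real.sqrt (-2 * v s)) :
    ∀ s, t ≤ s →
      -v s ≤ (Real.sqrt (-v t) * Real.exp (-(3/4) * (s - t))
        + (2 * Real.sqrt 2 / 3) * ε) ^ 2 := by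
  intro s hs
  set a : ℝ := Real.sqrt (-v t) with ha_def
  set c : ℝ := 2 * Real.sqrt 2 / 3 with hc_def
  have ha : 0 ≤ a := Real.sqrt_nonneg _
  have hc : 0 ≤ c * ε := by positivity
  have hsq2 : (0:ℝ) ≤ Real.sqrt 2 := Real.sqrt_nonneg _
  have key : ∀ δ : ℝ, 0 < δ →
      -v s ≤ (a * Real.exp (-(3/4) * (s - t)) + c * ε + δ) ^ 2 := by
    intro δ hδ
    set E : ℝ → ℝ := fun x => Real.exp (-(3/4) * (x - t)) with hE_def
    set u : ℝ → ℝ := fun x => a * E x + c * ε + δ with hu_def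
    have hEpos : ∀ x, 0 < E x := fun x => Real.exp_pos _
    have hupos : ∀ x, 0 < u x := fun x => by
      have := hEpos x
      have : 0 ≤ a * E x := by positivity
      simp only [hu_def]; linarith [hc, hδ]
    have hE' : ∀ x, HasDerivAt E (E x * -(3/4)) x := by
      intro x
      have h1 : HasDerivAt (fun x : ℝ => -(3/4) * (x - t)) (-(3/4)) x := by
        simpa using ((hasDerivAt_id x).sub_const t).const_mul (-(3/4) : ℝ)
      simpa [hE_def] using h1.exp
    have hu' : ∀ x, HasDerivAt u (a * (E x * -(3/4))) x := by
      intro x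
      have h := ((hE' x).const_mul a).add_const (c * ε + δ)
      simp only [hu_def, add_assoc]
      convert h using 2
    have hB' : ∀ x, HasDerivAt (fun x => (u x) ^ 2)
        (2 * u x * (a * (E x * -(3/4)))) x := by
      intro x
      have := (hu' x).fun_pow 2
      simpa [pow_one, mul_comm, mul_assoc, mul_left_comm] using this
    have main := image_le_of_deriv_right_lt_deriv_boundary
      (f := fun x => -v x) (f' := fun x => -deriv v x)
      (a := t) (b := s)
      (B := fun x => (u x) ^ 2) (B' := fun x => 2 * u x * (a * (E x * -(3/4))))
      (fun x hx => ((hdiff x hx.1).neg.continuousAt.continuousWithinAt))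
      (fun x hx => ((hdiff x hx.1).hasDerivAt.neg).hasDerivWithinAt)
      ?_ hB' ?_ (Set.right_mem_Icc.2 hs)
    · exact main
    · -- f t ≤ B t
      have hvt : 0 ≤ -v t := neg_nonneg.2 (hnonpos t le_rfl)
      have ha2 : a ^ 2 = -v t := Real.sq_sqrt hvt
      have hEt : E t = 1 := by simp [hE_def]
      have h0 : 0 ≤ c * ε + δ := by linarith [hc, hδ.le]
      simp only [hu_def, hEt, mul_one]
      nlinarith [ha, h0]
    · -- bound
      intro x hx hfx
      have hxt : t ≤ x := hx.1
      have hiq := hineq x hxt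
      have h1 : -deriv v x ≤ (3/2) * v x + ε * Real.sqrt (-2 * v x) := by linarith
      have hvx : -v x = (u x) ^ 2 := hfx
      have hsq : Real.sqrt (-2 * v x) = Real.sqrt 2 * u x := by
        have : -2 * v x = 2 * (u x) ^ 2 := by linarith
        rw [this, Real.sqrt_mul (by norm_num : (0:ℝ) ≤ 2),
          Real.sqrt_sq (hupos x).le]
      have hvx' : v x = -(u x) ^ 2 := by linarith
      rw [hsq, hvx'] at h1
      have hBval : 2 * u x * (a * (E x * -(3/4)))
          = -(3/2) * (u x) ^ 2 + Real.sqrt 2 * ε * u x + (3/2) * δ * u x := by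
        have haE : a * E x = u x - c * ε - δ := by simp [hu_def]; ring
        have hc32 : (3:ℝ)/2 * c = Real.sqrt 2 := by
          rw [hc_def]; ring
        calc 2 * u x * (a * (E x * -(3/4)))
            = -(3/2) * (a * E x) * u x := by ring
          _ = -(3/2) * (u x - c * ε - δ) * u x := by rw [haE]
          _ = -(3/2) * (u x)^2 + ((3:ℝ)/2 * c) * ε * u x + (3/2) * δ * u x := by ring
          _ = _ := by rw [hc32]
      rw [hBval]
      have := mul_pos (mul_pos (by norm_num : (0:ℝ) < 3/2) hδ) (hupos x)
      nlinarith [hupos x]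
  -- take δ → 0⁺
  have htend : Tendsto (fun δ : ℝ =>
      (a * Real.exp (-(3/4) * (s - t)) + c * ε + δ) ^ 2)
      (𝓝[>] 0) (𝓝 ((a * Real.exp (-(3/4) * (s - t)) + c * ε) ^ 2)) := by
    have : ContinuousAt (fun δ : ℝ =>
        (a * Real.exp (-(3/4) * (s - t)) + c * ε + δ) ^ 2) 0 := by fun_prop
    have h := this.tendsto.mono_left (nhdsWithin_le_nhds (s := Set.Ioi (0:ℝ)))
    simpa using h
  exact ge_of_tendsto htend (eventually_nhdsWithin_of_forall fun δ hδ => key δ hδ)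
end

section
/- Let u be a real-valued function on EuclideanSpace ℝ (Fin 4). Assume: (i) u is bounded; (ii) u is continuous on the closed half-space {x : x 0 ≥ 0}; (iii) u vanishes on the boundary hyperplane {x : x 0 = 0}; (iv) u is twice continuously differentiable on the open half-space {x : x 0 > 0} and harmonic there, meaning that at every point x with x 0 > 0 the sum over i ∈ Fin 4 of the second derivative of u at x twice in the i-th coordinate direction equals 0. Then u(x) = 0 for every x with x 0 ≥ 0. -/
set_option maxHeartbeats 1600000

open Real Filter Topology

noncomputable section



lemma cosh_lb (t : ℝ) : 1 + t^2/4 ≤ Real.cosh t := by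
  have h1 : 1 + |t| + |t|^2/2 ≤ Real.exp |t| := Real.quadratic_le_exp_of_nonneg (abs_nonneg t)
  have h2 : (-|t|) + 1 ≤ Real.exp (-|t|) := Real.add_one_le_exp _
  have h3 : |t|^2 = t^2 := sq_abs t
  have h4 : Real.cosh |t| = Real.cosh t := Real.cosh_abs t
  rw [← h4, Real.cosh_eq]
  nlinarith [abs_nonneg t]

lemma deriv2_eq {f f' f'' : ℝ → ℝ} (h1 : ∀ t, HasDerivAt f (f' t) t)
    (h2 : ∀ t, HasDerivAt f' (f'' t) t) : deriv (deriv f) 0 = f'' 0 := by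
  have e1 : deriv f = f' := funext fun t => (h1 t).deriv
  rw [e1]
  exact (h2 0).deriv

lemma deriv2_main (q₀ q₁ q₂ A k β : ℝ) :
    deriv (deriv (fun t : ℝ => q₀ + q₁*t + q₂*t^2 + A * Real.cos (k*t + β))) 0
      = 2*q₂ - A*k^2*Real.cos β := by
  have hlin : ∀ t : ℝ, HasDerivAt (fun t : ℝ => k*t + β) k t := fun t => by
    simpa using ((hasDerivAt_id t).const_mul k).add_const β
  have h1 : ∀ t : ℝ, HasDerivAt (fun t : ℝ => q₀ + q₁*t + q₂*t^2 + A * Real.cos (k*t + β))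
      (q₁ + 2*q₂*t + A * (-Real.sin (k*t+β) * k)) t := by
    intro t
    have hc : HasDerivAt (fun t : ℝ => Real.cos (k*t+β)) (-Real.sin (k*t+β) * k) t :=
      (hlin t).cos
    have := ((((hasDerivAt_const t q₀).add ((hasDerivAt_id t).const_mul q₁)).add
      ((hasDerivAt_pow 2 t).const_mul q₂)).add (hc.const_mul A))
    refine this.congr_deriv ?_
    norm_num
    ring
  have h2 : ∀ t : ℝ, HasDerivAt (fun t : ℝ => q₁ + 2*q₂*t + A * (-Real.sin (k*t+β) * k))
      (2*q₂ + A * (-(Real.cos (k*t+β) * k) * k)) t := by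
    intro t
    have hs : HasDerivAt (fun t : ℝ => Real.sin (k*t+β)) (Real.cos (k*t+β) * k) t :=
      (hlin t).sin
    have := ((hasDerivAt_const t q₁).add ((hasDerivAt_id t).const_mul (2*q₂))).add
      (((hs.neg).mul_const k).const_mul A)
    refine this.congr_deriv ?_
    ring
  rw [deriv2_eq h1 h2]
  norm_num
  ring

lemma deriv2_cosh_lin (D A k β : ℝ) :
    deriv (deriv (fun t : ℝ => D + A * Real.cosh (k*t + β))) 0 = A*k^2*Real.cosh β := by
  have hlin : ∀ t : ℝ, HasDerivAt (fun t : ℝ => k*t + β) k t := fun t => by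
    simpa using ((hasDerivAt_id t).const_mul k).add_const β
  have h1 : ∀ t : ℝ, HasDerivAt (fun t : ℝ => D + A * Real.cosh (k*t + β))
      (A * (Real.sinh (k*t+β) * k)) t := by
    intro t
    have hc : HasDerivAt (fun t : ℝ => Real.cosh (k*t+β)) (Real.sinh (k*t+β) * k) t :=
      (hlin t).cosh
    have := (hasDerivAt_const t D).add (hc.const_mul A)
    refine this.congr_deriv ?_
    ring
  have h2 : ∀ t : ℝ, HasDerivAt (fun t : ℝ => A * (Real.sinh (k*t+β) * k))
      (A * (Real.cosh (k*t+β) * k * k)) t := by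
    intro t
    have hs : HasDerivAt (fun t : ℝ => Real.sinh (k*t+β)) (Real.cosh (k*t+β) * k) t :=
      (hlin t).sinh
    have := (hs.mul_const k).const_mul A
    convert this using 1
  rw [deriv2_eq h1 h2]
  norm_num
  ring



lemma diffAt_deriv {f : ℝ → ℝ} (hf : ContDiffAt ℝ 2 f 0) : DifferentiableAt ℝ (deriv f) 0 := by
  have h : ContDiffAt ℝ 1 (fderiv ℝ f) 0 := hf.fderiv_right (by norm_num)
  have h2 : DifferentiableAt ℝ (fun y => fderiv ℝ f y 1) 0 :=
    (ContinuousLinearMap.apply ℝ ℝ (1:ℝ)).differentiableAt.comp 0 (h.differentiableAt one_ne_zero)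
  have e : deriv f = fun y => fderiv ℝ f y 1 := funext fun y => (fderiv_apply_one_eq_deriv).symm
  rw [e]
  exact h2

lemma second_deriv_nonpos {g : ℝ → ℝ} (hg : ContDiffAt ℝ 2 g 0) (hmax : IsLocalMax g 0) :
    deriv (deriv g) 0 ≤ 0 := by
  by_contra hL'
  push_neg at hL'
  set L := deriv (deriv g) 0 with hLdef
  have hev : ∀ᶠ t in 𝓝 (0:ℝ), ContDiffAt ℝ 2 g t := hg.eventually (by norm_num)
  have hdiff : ∀ᶠ t in 𝓝 (0:ℝ), DifferentiableAt ℝ g t :=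
    hev.mono fun t ht => ht.differentiableAt two_ne_zero
  have hd0 : deriv g 0 = 0 := hmax.deriv_eq_zero
  have hD : HasDerivAt (deriv g) L 0 := (diffAt_deriv hg).hasDerivAt
  rw [hasDerivAt_iff_tendsto_slope] at hD
  have h1 : ∀ᶠ t in 𝓝[≠] (0:ℝ), L/2 < slope (deriv g) 0 t :=
    hD.eventually (eventually_gt_nhds (by linarith))
  have hpos : ∀ᶠ t in 𝓝[>] (0:ℝ), 0 < deriv g t := by
    have h2 : ∀ᶠ t in 𝓝[>] (0:ℝ), L/2 < slope (deriv g) 0 t :=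
      h1.filter_mono (nhdsWithin_mono 0 (fun t ht => ne_of_gt ht))
    filter_upwards [h2, self_mem_nhdsWithin] with t hslope ht
    have ht' : (0:ℝ) < t := ht
    have : slope (deriv g) 0 t = deriv g t / t := by
      simp [slope_def_field, hd0]
    rw [this] at hslope
    have h3 := (lt_div_iff₀ ht').mp hslope
    nlinarith
  rw [eventually_nhdsWithin_iff] at hpos
  have hall := (hdiff.and (hpos.and hmax))
  rw [Metric.eventually_nhds_iff] at hall
  obtain ⟨δ, hδ, hH⟩ := hall
  have hmem : ∀ t ∈ Set.Icc (0:ℝ) (δ/2), dist t 0 < δ := by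
    intro t ht
    rw [Real.dist_eq, sub_zero, abs_of_nonneg ht.1]
    linarith [ht.2]
  have hmono : StrictMonoOn g (Set.Icc 0 (δ/2)) := by
    apply strictMonoOn_of_deriv_pos (convex_Icc _ _)
    · intro t ht
      exact ((hH (hmem t ht)).1.continuousAt).continuousWithinAt
    · intro t ht
      rw [interior_Icc] at ht
      exact (hH (hmem t ⟨ht.1.le, ht.2.le⟩)).2.1 ht.1
  have h02 : (0:ℝ) < δ/2 := by linarith
  have := hmono (Set.left_mem_Icc.2 (by linarith)) ⟨h02.le, le_rfl⟩ h02
  have hle : g (δ/2) ≤ g 0 := (hH (hmem _ ⟨h02.le, le_rfl⟩)).2.2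
  linarith


variable {F : Type*} [NormedAddCommGroup F] [NormedSpace ℝ F]

lemma line_hasDerivAt (x e : F) (t : ℝ) : HasDerivAt (fun s : ℝ => x + s • e) e t := by
  simpa using ((hasDerivAt_id t).smul_const e).const_add x

lemma line_contDiffAt {f : F → ℝ} {x : F} (e : F) (hf : ContDiffAt ℝ 2 f x) :
    ContDiffAt ℝ 2 (fun t : ℝ => f (x + t • e)) 0 := by
  have hline : ContDiff ℝ 2 (fun t : ℝ => x + t • e) :=
    contDiff_const.add (contDiff_id.smul contDiff_const)
  have hf' : ContDiffAt ℝ 2 f (x + (0:ℝ) • e) := by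
    simpa using hf
  exact hf'.comp 0 hline.contDiffAt

lemma line_deriv2 {f : F → ℝ} {x : F} (e : F) (hf : ContDiffAt ℝ 2 f x) :
    deriv (deriv (fun t : ℝ => f (x + t • e))) 0
      = fderiv ℝ (fun y => fderiv ℝ f y e) x e := by
  have hev : ∀ᶠ y in 𝓝 x, ContDiffAt ℝ 2 f y := hf.eventually (by norm_num)
  have hl0 : x + (0:ℝ) • e = x := by simp
  have htend : Tendsto (fun t : ℝ => x + t • e) (𝓝 0) (𝓝 x) := by
    have := (line_hasDerivAt x e 0).continuousAt.tendsto
    rwa [hl0] at this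
  have hev' : ∀ᶠ t in 𝓝 (0:ℝ), ContDiffAt ℝ 2 f (x + t • e) := htend.eventually hev
  have heq : deriv (fun t : ℝ => f (x + t • e)) =ᶠ[𝓝 (0:ℝ)]
      fun t => fderiv ℝ f (x + t • e) e := by
    filter_upwards [hev'] with t ht
    have hd : HasDerivAt (fun s : ℝ => f (x + s • e)) (fderiv ℝ f (x + t • e) e) t :=
      ((ht.differentiableAt two_ne_zero).hasFDerivAt).comp_hasDerivAt t (line_hasDerivAt x e t)
    exact hd.deriv
  rw [heq.deriv_eq]
  have h1 : ContDiffAt ℝ 1 (fderiv ℝ f) x := hf.fderiv_right (by norm_num)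
  have hφ : DifferentiableAt ℝ (fun y => fderiv ℝ f y e) x :=
    (ContinuousLinearMap.apply ℝ ℝ e).differentiableAt.comp x (h1.differentiableAt one_ne_zero)
  have hd2 : HasDerivAt (fun t : ℝ => fderiv ℝ f (x + t • e) e)
      (fderiv ℝ (fun y => fderiv ℝ f y e) x e) 0 := by
    have hφ' : HasFDerivAt (fun y => fderiv ℝ f y e)
        (fderiv ℝ (fun y => fderiv ℝ f y e) x) (x + (0:ℝ) • e) := by
      rw [hl0]; exact hφ.hasFDerivAt
    exact hφ'.comp_hasDerivAt 0 (line_hasDerivAt x e 0)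
  exact hd2.deriv

lemma deriv2_sub {f g : ℝ → ℝ} (hf : ContDiffAt ℝ 2 f 0) (hg : ContDiffAt ℝ 2 g 0) :
    deriv (deriv (fun t => f t - g t)) 0 = deriv (deriv f) 0 - deriv (deriv g) 0 := by
  have hf1 : ∀ᶠ t in 𝓝 (0:ℝ), DifferentiableAt ℝ f t :=
    (hf.eventually (by norm_num)).mono fun t ht => ht.differentiableAt two_ne_zero
  have hg1 : ∀ᶠ t in 𝓝 (0:ℝ), DifferentiableAt ℝ g t :=
    (hg.eventually (by norm_num)).mono fun t ht => ht.differentiableAt two_ne_zero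
  have he : deriv (fun t => f t - g t) =ᶠ[𝓝 (0:ℝ)] fun t => deriv f t - deriv g t := by
    filter_upwards [hf1, hg1] with t h1 h2
    exact deriv_sub h1 h2
  rw [he.deriv_eq]
  exact deriv_sub (diffAt_deriv hf) (diffAt_deriv hg)




abbrev E4 := EuclideanSpace ℝ (Fin 4)

lemma cos_half {θ : ℝ} (h : |θ| ≤ π/4) : 1/2 ≤ Real.cos θ := by
  have h1 : 1 - θ^2/2 ≤ Real.cos θ := Real.one_sub_sq_div_two_le_cos
  have h2 : θ^2 ≤ (π/4)^2 := by
    rw [← sq_abs θ]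
    exact pow_le_pow_left₀ (abs_nonneg θ) h 2
  have hπ : π ≤ 4 := Real.pi_le_four
  have hπ0 : 0 < π := Real.pi_pos
  nlinarith

lemma hproj4 (i : Fin 4) : Continuous fun y : E4 => y i :=
  (EuclideanSpace.proj i).continuous

lemma hprojCD (i : Fin 4) : ContDiff ℝ 2 fun y : E4 => y i :=
  (EuclideanSpace.proj (𝕜 := ℝ) (ι := Fin 4) i).contDiff

lemma coord_same (x : E4) (i : Fin 4) (t : ℝ) :
    (x + t • EuclideanSpace.single i (1:ℝ)) i = x i + t := by
  simp [PiLp.add_apply, PiLp.smul_apply, EuclideanSpace.single_apply]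

lemma coord_ne {j i : Fin 4} (h : j ≠ i) (x : E4) (t : ℝ) :
    (x + t • EuclideanSpace.single i (1:ℝ)) j = x j := by
  simp [PiLp.add_apply, PiLp.smul_apply, EuclideanSpace.single_apply, h]

lemma hnormsq (y : E4) : ‖y‖^2 = (y 0)^2 + (y 1)^2 + (y 2)^2 + (y 3)^2 := by
  rw [EuclideanSpace.norm_eq, Real.sq_sqrt (by positivity)]
  simp [Fin.sum_univ_four, Real.norm_eq_abs, sq_abs]


lemma slab_bound (u : E4 → ℝ) (M : ℝ) (hM : 0 < M) (hub : ∀ x, u x ≤ M)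
    (hcont : ContinuousOn u {x : E4 | 0 ≤ x 0})
    (hbdry : ∀ x : E4, x 0 = 0 → u x = 0)
    (hsmooth : ContDiffOn ℝ 2 u {x : E4 | 0 < x 0})
    (hharm : ∀ x : E4, 0 < x 0 →
      (∑ i : Fin 4,
        fderiv ℝ (fun y => fderiv ℝ u y (EuclideanSpace.single i (1:ℝ))) x
          (EuclideanSpace.single i (1:ℝ))) = 0)
    (a : ℝ) (ha : 2 ≤ a) (ε : ℝ) (hε : 0 < ε) :
    ∀ z : E4, 0 ≤ z 0 → z 0 ≤ a →
      u z ≤ 2*M/a * (z 0) + ε * (Real.cos (π/(2*a) * z 0 - π/4) *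
        (Real.cosh (π/(2*a) * z 1) + Real.cosh (π/(2*a) * z 2) + Real.cosh (π/(2*a) * z 3))) := by
  have ha0 : (0:ℝ) < a := by linarith
  set μ : ℝ := π/(2*a) with hμdef
  set b : ℝ := -(π/4) with hbdef
  set c₁ : ℝ := 2*M/a with hc₁def
  set c₂ : ℝ := -(M/a^2) with hc₂def
  set W : E4 → ℝ := fun y => c₁ * y 0 + c₂ * (y 0)^2 +
      ε * (Real.cos (μ * y 0 + b) * (Real.cosh (μ * y 1) + Real.cosh (μ * y 2) + Real.cosh (μ * y 3)))
    with hWdef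
  clear_value μ b c₁ c₂ W
  have hπ0 : 0 < π := Real.pi_pos
  have hπ4 : π ≤ 4 := Real.pi_le_four
  have hμ0 : 0 < μ := by rw [hμdef]; positivity
  have hμa : μ * a = π/2 := by rw [hμdef]; field_simp
  -- cos lower bound on the slab
  have hcos : ∀ s : ℝ, 0 ≤ s → s ≤ a → 1/2 ≤ Real.cos (μ * s + b) := by
    intro s h0 h1
    apply _root_.cos_half
    rw [abs_le, hbdef]
    constructor
    · nlinarith [mul_le_mul_of_nonneg_left h1 hμ0.le]
    · nlinarith [mul_le_mul_of_nonneg_left h1 hμ0.le, mul_nonneg hμ0.le h0]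
  have hcoshpos : ∀ t : ℝ, 0 < Real.cosh t := fun t => Real.cosh_pos t
  -- quadratic part nonneg on slab
  have hquad : ∀ s : ℝ, 0 ≤ s → s ≤ a → 0 ≤ c₁ * s + c₂ * s^2 := by
    intro s h0 h1
    rw [hc₁def, hc₂def]
    have he : 2*M/a * s + -(M/a^2) * s^2 = (M/a^2) * s * (2*a - s) := by
      field_simp
      ring
    rw [he]
    have hp : 0 ≤ (M/a^2) := by positivity
    have : 0 ≤ s * (2*a - s) := by nlinarith
    nlinarith
  -- W nonneg on slab
  have hWpos : ∀ y : E4, 0 ≤ y 0 → y 0 ≤ a → 0 ≤ W y := by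
    intro y h0 h1
    simp only [hWdef]
    have h2 := hcos _ h0 h1
    have h3 := hquad _ h0 h1
    have s1 := hcoshpos (μ * y 1); have s2 := hcoshpos (μ * y 2); have s3 := hcoshpos (μ * y 3)
    have hcosp : 0 < Real.cos (μ * y 0 + b) := lt_of_lt_of_le (by norm_num) h2
    have hSpos : (0:ℝ) < Real.cosh (μ * y 1) + Real.cosh (μ * y 2) + Real.cosh (μ * y 3) := by
      linarith
    have := mul_pos hε (mul_pos hcosp hSpos)
    linarith
  -- main claim : u ≤ W on slab
  have hclaim : ∀ y : E4, 0 ≤ y 0 → y 0 ≤ a → u y - W y ≤ 0 := by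
    by_contra hcon
    push_neg at hcon
    obtain ⟨z', hz'0, hz'a, hz'pos⟩ := hcon
    set v : E4 → ℝ := fun y => u y - W y with hvdef
    clear_value v
    have hc : 0 < v z' := by simp only [hvdef]; exact hz'pos
    -- coercivity
    have hcoerc : ∀ y : E4, 0 ≤ y 0 → y 0 ≤ a →
        v y ≤ M - ε*μ^2/8 * (‖y‖^2 - (y 0)^2) := by
      intro y h0 h1
      have hcy := hcos _ h0 h1
      have hq := hquad _ h0 h1
      have l1 := cosh_lb (μ * y 1); have l2 := cosh_lb (μ * y 2); have l3 := cosh_lb (μ * y 3)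
      have hnrm := hnormsq y
      have hS : (0:ℝ) ≤ Real.cosh (μ * y 1) + Real.cosh (μ * y 2) + Real.cosh (μ * y 3) := by
        nlinarith [hcoshpos (μ * y 1), hcoshpos (μ * y 2), hcoshpos (μ * y 3)]
      have hcs : (1/2) * (Real.cosh (μ * y 1) + Real.cosh (μ * y 2) + Real.cosh (μ * y 3))
          ≤ Real.cos (μ * y 0 + b) * (Real.cosh (μ * y 1) + Real.cosh (μ * y 2) + Real.cosh (μ * y 3)) := by
        nlinarith
      have hub' := hub y
      have hS2 : (μ^2/4) * ((y 1)^2 + (y 2)^2 + (y 3)^2)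
          ≤ Real.cosh (μ * y 1) + Real.cosh (μ * y 2) + Real.cosh (μ * y 3) := by
        nlinarith
      have hA : ε * ((1/2) * (Real.cosh (μ * y 1) + Real.cosh (μ * y 2) + Real.cosh (μ * y 3)))
          ≤ ε * (Real.cos (μ * y 0 + b) * (Real.cosh (μ * y 1) + Real.cosh (μ * y 2) + Real.cosh (μ * y 3))) :=
        mul_le_mul_of_nonneg_left hcs hε.le
      have hB : ε/2 * ((μ^2/4) * ((y 1)^2 + (y 2)^2 + (y 3)^2))
          ≤ ε/2 * (Real.cosh (μ * y 1) + Real.cosh (μ * y 2) + Real.cosh (μ * y 3)) :=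
        mul_le_mul_of_nonneg_left hS2 (by positivity)
      have hE : ε*μ^2/8 * (‖y‖^2 - (y 0)^2)
          = ε/2 * ((μ^2/4) * ((y 1)^2 + (y 2)^2 + (y 3)^2)) := by
        rw [hnrm]; ring
      simp only [hvdef, hWdef]
      rw [hE]
      linarith
    -- radius
    set Q : ℝ := 8*M/(ε*μ^2) with hQdef
    clear_value Q
    have hQ0 : 0 ≤ Q := by rw [hQdef]; positivity
    set r : ℝ := ‖z'‖ + a + Q + 1 with hrdef
    clear_value r
    have hr0 : 0 ≤ r := by rw [hrdef]; positivity
    have hQM : ε*μ^2/8 * Q = M := by rw [hQdef]; field_simp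
    -- compact set
    set K : Set E4 := {y : E4 | 0 ≤ y 0 ∧ y 0 ≤ a} ∩ Metric.closedBall 0 r with hKdef
    have hclosedslab : IsClosed {y : E4 | 0 ≤ y 0 ∧ y 0 ≤ a} :=
      (isClosed_le continuous_const (hproj4 0)).inter (isClosed_le (hproj4 0) continuous_const)
    have hKcompact : IsCompact K :=
      (isCompact_closedBall (0:E4) r).of_isClosed_subset
        (hclosedslab.inter Metric.isClosed_closedBall) Set.inter_subset_right
    have hzK : z' ∈ K := by
      refine ⟨⟨hz'0, hz'a⟩, ?_⟩
      rw [mem_closedBall_zero_iff, hrdef]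
      linarith [hQ0, ha0]
    have hWcont : Continuous W := by
      simp only [hWdef]
      fun_prop
    have hvcont : ContinuousOn v K := by
      simp only [hvdef]
      exact (hcont.mono (fun y hy => hy.1.1)).sub hWcont.continuousOn
    obtain ⟨x₀, hx₀K, hx₀max⟩ := hKcompact.exists_isMaxOn ⟨z', hzK⟩ hvcont
    have hmaxK : ∀ y ∈ K, v y ≤ v x₀ := hx₀max
    have hvx₀ : v z' ≤ v x₀ := hmaxK z' hzK
    have hx₀slab : 0 ≤ x₀ 0 ∧ x₀ 0 ≤ a := hx₀K.1
    have hvx₀pos : 0 < v x₀ := lt_of_lt_of_le hc hvx₀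
    -- global max over slab
    have hglobal : ∀ y : E4, 0 ≤ y 0 → y 0 ≤ a → v y ≤ v x₀ := by
      intro y h0 h1
      by_cases hy : y ∈ Metric.closedBall (0:E4) r
      · exact hmaxK y ⟨⟨h0, h1⟩, hy⟩
      · have hyr : r < ‖y‖ := by
          rw [Metric.mem_closedBall, dist_zero_right, not_le] at hy
          exact hy
        have h2 := hcoerc y h0 h1
        have h3 : Q ≤ ‖y‖^2 - (y 0)^2 := by
          have : r^2 ≤ ‖y‖^2 := by nlinarith
          have hy0 : (y 0)^2 ≤ a^2 := by nlinarith
          have : (a + Q)^2 ≤ r^2 := by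
            rw [hrdef]
            nlinarith [norm_nonneg z']
          nlinarith
        have h4 : ε*μ^2/8 * Q ≤ ε*μ^2/8 * (‖y‖^2 - (y 0)^2) :=
          mul_le_mul_of_nonneg_left h3 (by positivity)
        rw [hQM] at h4
        linarith [hvx₀pos, h2, h4]
    -- interior
    have hx₀0 : 0 < x₀ 0 := by
      rcases lt_or_eq_of_le hx₀slab.1 with h | h
      · exact h
      · exfalso
        have hu0 : u x₀ = 0 := hbdry x₀ h.symm
        have hW0 : 0 ≤ W x₀ := hWpos x₀ hx₀slab.1 hx₀slab.2
        have : v x₀ ≤ 0 := by simp only [hvdef]; linarith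
        linarith
    have hx₀a : x₀ 0 < a := by
      rcases lt_or_eq_of_le hx₀slab.2 with h | h
      · exact h
      · exfalso
        have hWa : c₁ * a + c₂ * a^2 = M := by rw [hc₁def, hc₂def]; field_simp; ring
        have hWx : M ≤ W x₀ := by
          simp only [hWdef]
          rw [h]
          have h2 := hcos a (by linarith) le_rfl
          have hcp : 0 < Real.cos (μ * a + b) := lt_of_lt_of_le (by norm_num) h2
          have hSp : (0:ℝ) < Real.cosh (μ * x₀ 1) + Real.cosh (μ * x₀ 2) + Real.cosh (μ * x₀ 3) := by
            linarith [hcoshpos (μ * x₀ 1), hcoshpos (μ * x₀ 2), hcoshpos (μ * x₀ 3)]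
          have hprod := mul_pos hε (mul_pos hcp hSp)
          linarith [hWa]
        have : v x₀ ≤ 0 := by simp only [hvdef]; linarith [hub x₀]
        linarith
    -- local max
    have hopenslab : IsOpen {y : E4 | 0 < y 0 ∧ y 0 < a} :=
      (isOpen_lt continuous_const (hproj4 0)).inter (isOpen_lt (hproj4 0) continuous_const)
    have hlocmax : IsLocalMax v x₀ :=
      Filter.eventually_of_mem (hopenslab.mem_nhds ⟨hx₀0, hx₀a⟩)
        (fun y hy => hglobal y hy.1.le hy.2.le)
    -- smoothness at x₀
    have hopen : IsOpen {y : E4 | 0 < y 0} := isOpen_lt continuous_const (hproj4 0)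
    have hcd_u : ContDiffAt ℝ 2 u x₀ := hsmooth.contDiffAt (hopen.mem_nhds hx₀0)
    have hWsmooth : ContDiff ℝ 2 W := by
      rw [hWdef]
      have hcosW : ContDiff ℝ 2 fun y : E4 => Real.cos (μ * y 0 + b) :=
        ((contDiff_const.mul (hprojCD 0)).add contDiff_const).cos
      have hch : ∀ i : Fin 4, ContDiff ℝ 2 fun y : E4 => Real.cosh (μ * y i) :=
        fun i => (contDiff_const.mul (hprojCD i)).cosh
      exact ((contDiff_const.mul (hprojCD 0)).add
          (contDiff_const.mul ((hprojCD 0).pow 2))).add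
        (contDiff_const.mul (hcosW.mul (((hch 1).add (hch 2)).add (hch 3))))
    have hcd_v : ContDiffAt ℝ 2 v x₀ := by
      simp only [hvdef]
      exact hcd_u.sub hWsmooth.contDiffAt
    -- per-direction inequalities
    have hTle : ∀ i : Fin 4,
        fderiv ℝ (fun y => fderiv ℝ u y (EuclideanSpace.single i (1:ℝ))) x₀
            (EuclideanSpace.single i (1:ℝ))
          ≤ deriv (deriv (fun t : ℝ => W (x₀ + t • EuclideanSpace.single i (1:ℝ)))) 0 := by
      intro i
      set e : E4 := EuclideanSpace.single i (1:ℝ) with hedef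
      have htend : Tendsto (fun t : ℝ => x₀ + t • e) (𝓝 0) (𝓝 x₀) := by
        have hcont' : Continuous (fun t : ℝ => x₀ + t • e) := by fun_prop
        have := hcont'.tendsto 0
        simpa using this
      have hgmax : IsLocalMax (fun t : ℝ => v (x₀ + t • e)) 0 := by
        have h1 := htend.eventually hlocmax
        have h0 : v (x₀ + (0:ℝ) • e) = v x₀ := by simp
        exact h1.mono fun t ht => le_trans ht (le_of_eq h0.symm)
      have hg2 : deriv (deriv (fun t : ℝ => v (x₀ + t • e))) 0 ≤ 0 :=
        second_deriv_nonpos (line_contDiffAt e hcd_v) hgmax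
      have hsplit : deriv (deriv (fun t : ℝ => v (x₀ + t • e))) 0
          = deriv (deriv (fun t : ℝ => u (x₀ + t • e))) 0
            - deriv (deriv (fun t : ℝ => W (x₀ + t • e))) 0 := by
        have := deriv2_sub (f := fun t : ℝ => u (x₀ + t • e)) (g := fun t : ℝ => W (x₀ + t • e))
          (line_contDiffAt e hcd_u) (line_contDiffAt e hWsmooth.contDiffAt)
        simp only [hvdef]
        exact this
      have hline := line_deriv2 e hcd_u
      rw [hsplit, hline] at hg2
      linarith
    -- explicit second derivatives of W along directions
    set Cs : ℝ := Real.cosh (μ * x₀ 1) + Real.cosh (μ * x₀ 2) + Real.cosh (μ * x₀ 3) with hCsdef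
    set β : ℝ := μ * x₀ 0 + b with hβdef
    clear_value Cs β
    have hS0 : deriv (deriv (fun t : ℝ => W (x₀ + t • EuclideanSpace.single 0 (1:ℝ)))) 0
        = 2*c₂ - (ε*Cs)*μ^2*Real.cos β := by
      have hrw : (fun t : ℝ => W (x₀ + t • EuclideanSpace.single 0 (1:ℝ)))
          = fun t : ℝ => (c₁ * x₀ 0 + c₂ * (x₀ 0)^2) + (c₁ + 2*c₂*(x₀ 0))*t + c₂*t^2
              + (ε*Cs) * Real.cos (μ*t + β) := by
        funext t
        simp only [hWdef, coord_same, coord_ne (show (1:Fin 4) ≠ 0 by decide),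
          coord_ne (show (2:Fin 4) ≠ 0 by decide), coord_ne (show (3:Fin 4) ≠ 0 by decide)]
        rw [show μ * (x₀ 0 + t) + b = μ*t + β by rw [hβdef]; ring]
        rw [hCsdef]
        ring
      rw [hrw]
      exact deriv2_main _ _ _ _ _ _
    have hS1 : deriv (deriv (fun t : ℝ => W (x₀ + t • EuclideanSpace.single 1 (1:ℝ)))) 0
        = (ε*Real.cos β)*μ^2*Real.cosh (μ * x₀ 1) := by
      have hrw : (fun t : ℝ => W (x₀ + t • EuclideanSpace.single 1 (1:ℝ)))
          = fun t : ℝ => (c₁ * x₀ 0 + c₂ * (x₀ 0)^2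
              + ε * (Real.cos β * (Real.cosh (μ * x₀ 2) + Real.cosh (μ * x₀ 3))))
              + (ε*Real.cos β) * Real.cosh (μ*t + μ * x₀ 1) := by
        funext t
        simp only [hWdef, coord_same, coord_ne (show (0:Fin 4) ≠ 1 by decide),
          coord_ne (show (2:Fin 4) ≠ 1 by decide), coord_ne (show (3:Fin 4) ≠ 1 by decide)]
        rw [show μ * (x₀ 1 + t) = μ*t + μ * x₀ 1 by ring, hβdef]
        ring
      rw [hrw]
      exact deriv2_cosh_lin _ _ _ _
    have hS2 : deriv (deriv (fun t : ℝ => W (x₀ + t • EuclideanSpace.single 2 (1:ℝ)))) 0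
        = (ε*Real.cos β)*μ^2*Real.cosh (μ * x₀ 2) := by
      have hrw : (fun t : ℝ => W (x₀ + t • EuclideanSpace.single 2 (1:ℝ)))
          = fun t : ℝ => (c₁ * x₀ 0 + c₂ * (x₀ 0)^2
              + ε * (Real.cos β * (Real.cosh (μ * x₀ 1) + Real.cosh (μ * x₀ 3))))
              + (ε*Real.cos β) * Real.cosh (μ*t + μ * x₀ 2) := by
        funext t
        simp only [hWdef, coord_same, coord_ne (show (0:Fin 4) ≠ 2 by decide),
          coord_ne (show (1:Fin 4) ≠ 2 by decide), coord_ne (show (3:Fin 4) ≠ 2 by decide)]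
        rw [show μ * (x₀ 2 + t) = μ*t + μ * x₀ 2 by ring, hβdef]
        ring
      rw [hrw]
      exact deriv2_cosh_lin _ _ _ _
    have hS3 : deriv (deriv (fun t : ℝ => W (x₀ + t • EuclideanSpace.single 3 (1:ℝ)))) 0
        = (ε*Real.cos β)*μ^2*Real.cosh (μ * x₀ 3) := by
      have hrw : (fun t : ℝ => W (x₀ + t • EuclideanSpace.single 3 (1:ℝ)))
          = fun t : ℝ => (c₁ * x₀ 0 + c₂ * (x₀ 0)^2
              + ε * (Real.cos β * (Real.cosh (μ * x₀ 1) + Real.cosh (μ * x₀ 2))))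
              + (ε*Real.cos β) * Real.cosh (μ*t + μ * x₀ 3) := by
        funext t
        simp only [hWdef, coord_same, coord_ne (show (0:Fin 4) ≠ 3 by decide),
          coord_ne (show (1:Fin 4) ≠ 3 by decide), coord_ne (show (2:Fin 4) ≠ 3 by decide)]
        rw [show μ * (x₀ 3 + t) = μ*t + μ * x₀ 3 by ring, hβdef]
        ring
      rw [hrw]
      exact deriv2_cosh_lin _ _ _ _
    -- contradiction
    have hsum := hharm x₀ hx₀0
    rw [Fin.sum_univ_four] at hsum
    have h0 := hTle 0; have h1 := hTle 1; have h2 := hTle 2; have h3 := hTle 3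
    rw [hS0] at h0; rw [hS1] at h1; rw [hS2] at h2; rw [hS3] at h3
    have hCsum : (2*c₂ - (ε*Cs)*μ^2*Real.cos β)
        + (ε*Real.cos β)*μ^2*Real.cosh (μ * x₀ 1)
        + (ε*Real.cos β)*μ^2*Real.cosh (μ * x₀ 2)
        + (ε*Real.cos β)*μ^2*Real.cosh (μ * x₀ 3) = 2*c₂ := by
      rw [hCsdef]; ring
    have hc₂neg : 2*c₂ < 0 := by
      rw [hc₂def]
      have : 0 < M/a^2 := by positivity
      linarith
    linarith
  -- conclude the bound at z
  intro z h0 h1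
  have hzW := hclaim z h0 h1
  have hq : c₂ * (z 0)^2 ≤ 0 := by
    rw [hc₂def]
    have : 0 ≤ (M/a^2) * (z 0)^2 := by positivity
    linarith
  have hW : u z ≤ W z := by linarith
  simp only [hWdef] at hW
  rw [show μ * z 0 + b = μ * z 0 - π/4 by rw [hbdef]; ring] at hW
  linarith [hq, hc₁def]


lemma halfspace_nonpos (u : E4 → ℝ) (M : ℝ) (hM : 0 < M) (hub : ∀ x, u x ≤ M)
    (hcont : ContinuousOn u {x : E4 | 0 ≤ x 0})
    (hbdry : ∀ x : E4, x 0 = 0 → u x = 0)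
    (hsmooth : ContDiffOn ℝ 2 u {x : E4 | 0 < x 0})
    (hharm : ∀ x : E4, 0 < x 0 →
      (∑ i : Fin 4,
        fderiv ℝ (fun y => fderiv ℝ u y (EuclideanSpace.single i (1:ℝ))) x
          (EuclideanSpace.single i (1:ℝ))) = 0) :
    ∀ z : E4, 0 ≤ z 0 → u z ≤ 0 := by
  intro z hz
  by_contra hpos
  push_neg at hpos
  have hδ : ∀ δ : ℝ, 0 < δ → u z ≤ δ := by
    intro δ hδ0
    set a : ℝ := max 2 (max (z 0) (4*M*(z 0)/δ)) with hadef
    have ha2 : 2 ≤ a := le_max_left _ _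
    have haz : z 0 ≤ a := le_trans (le_max_left (z 0) _) (le_max_right 2 _)
    have ha4 : 4*M*(z 0)/δ ≤ a := le_trans (le_max_right (z 0) _) (le_max_right 2 _)
    have ha0 : (0:ℝ) < a := by linarith
    set S : ℝ := Real.cosh (π/(2*a) * z 1) + Real.cosh (π/(2*a) * z 2) + Real.cosh (π/(2*a) * z 3)
      with hSdef
    have hS3 : (3:ℝ) ≤ S := by
      rw [hSdef]
      linarith [Real.one_le_cosh (π/(2*a) * z 1), Real.one_le_cosh (π/(2*a) * z 2),
        Real.one_le_cosh (π/(2*a) * z 3)]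
    have hSpos : (0:ℝ) < S := by linarith
    have hcos1 : Real.cos (π/(2*a) * z 0 - π/4) ≤ 1 := Real.cos_le_one _
    have hb := slab_bound u M hM hub hcont hbdry hsmooth hharm a ha2 (δ/(2*S))
      (by positivity) z hz haz
    have h1 : (δ/(2*S)) * (Real.cos (π/(2*a) * z 0 - π/4) * S) ≤ δ/2 := by
      have hcS : Real.cos (π/(2*a) * z 0 - π/4) * S ≤ S := by nlinarith [mul_nonneg (sub_nonneg.mpr hcos1) hSpos.le]
      have := mul_le_mul_of_nonneg_left hcS (by positivity : (0:ℝ) ≤ δ/(2*S))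
      have heq : (δ/(2*S)) * S = δ/2 := by field_simp [hSpos.ne']
      linarith
    have h2 : 2*M/a*(z 0) ≤ δ/2 := by
      have hz4 : 4*M*(z 0) ≤ δ * a := by
        have := mul_le_mul_of_nonneg_left ha4 hδ0.le
        have heq : δ * (4*M*(z 0)/δ) = 4*M*(z 0) := by field_simp
        linarith
      have heq2 : 2*M/a*(z 0) = 2*M*(z 0)/a := by ring
      rw [heq2, div_le_iff₀ ha0]
      nlinarith
    rw [hSdef] at hb
    linarith
  linarith [hδ (u z / 2) (by linarith)]

/-- Liouville-type rigidity on the half-space: a bounded harmonic function on the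
open half-space, continuous up to the boundary and vanishing there, is zero. -/
theorem stmt_11 (u : EuclideanSpace ℝ (Fin 4) → ℝ)
    (hbdd : ∃ M : ℝ, ∀ x, |u x| ≤ M)
    (hcont : ContinuousOn u {x : EuclideanSpace ℝ (Fin 4) | 0 ≤ x 0})
    (hbdry : ∀ x : EuclideanSpace ℝ (Fin 4), x 0 = 0 → u x = 0)
    (hsmooth : ContDiffOn ℝ 2 u {x : EuclideanSpace ℝ (Fin 4) | 0 < x 0})
    (hharm : ∀ x : EuclideanSpace ℝ (Fin 4), 0 < x 0 →
      (∑ i : Fin 4,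
        fderiv ℝ (fun y => fderiv ℝ u y (EuclideanSpace.single i (1:ℝ))) x
          (EuclideanSpace.single i (1:ℝ))) = 0) :
    ∀ x : EuclideanSpace ℝ (Fin 4), 0 ≤ x 0 → u x = 0 := by
  obtain ⟨M₀, hM₀⟩ := hbdd
  set M : ℝ := |M₀| + 1 with hMdef
  have hM : 0 < M := by positivity
  have hub : ∀ x, u x ≤ M := by
    intro x
    have h1 := (le_abs_self (u x)).trans (hM₀ x)
    have h2 := le_abs_self M₀
    rw [hMdef]; linarith
  have hlb : ∀ x, -M ≤ u x := by
    intro x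
    have h1 := (neg_abs_le (u x))
    have h2 := (hM₀ x).trans (le_abs_self M₀)
    have h3 : |u x| ≤ |M₀| := (hM₀ x).trans (le_abs_self M₀)
    rw [hMdef]
    have := neg_abs_le (u x)
    have h4 : -|M₀| ≤ -|u x| := by linarith
    linarith
  have hle := halfspace_nonpos u M hM hub hcont hbdry hsmooth hharm
  -- apply to -u
  have hharm' : ∀ x : EuclideanSpace ℝ (Fin 4), 0 < x 0 →
      (∑ i : Fin 4,
        fderiv ℝ (fun y => fderiv ℝ (fun w => -u w) y (EuclideanSpace.single i (1:ℝ))) x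
          (EuclideanSpace.single i (1:ℝ))) = 0 := by
    intro x hx
    have hterm : ∀ i : Fin 4,
        fderiv ℝ (fun y => fderiv ℝ (fun w => -u w) y (EuclideanSpace.single i (1:ℝ))) x
            (EuclideanSpace.single i (1:ℝ))
          = -(fderiv ℝ (fun y => fderiv ℝ u y (EuclideanSpace.single i (1:ℝ))) x
            (EuclideanSpace.single i (1:ℝ))) := by
      intro i
      have h1 : (fun y : E4 => fderiv ℝ (fun w => -u w) y (EuclideanSpace.single i (1:ℝ)))
          = fun y => -(fderiv ℝ u y (EuclideanSpace.single i (1:ℝ))) := by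
        funext y
        rw [fderiv_fun_neg]
        simp
      rw [h1, fderiv_fun_neg]
      simp
    rw [Fin.sum_univ_four, hterm 0, hterm 1, hterm 2, hterm 3]
    have h := hharm x hx
    rw [Fin.sum_univ_four] at h
    linarith
  have hge := halfspace_nonpos (fun w => -u w) M hM (fun x => by show -u x ≤ M; linarith [hlb x])
    (hcont.neg) (fun x hx => by simp [hbdry x hx]) (hsmooth.neg) hharm'
  intro x hx
  have h1 := hle x hx
  have h2 := hge x hx
  linarith
end
end
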